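/- Let I ⊆ ℝ be a compact interval and f : I → I a continuous map which is strongly indecomposable. Then there exist a positive integer n and pairwise disjoint nondegenerate closed subintervals J_0, J_1, …, J_{n-1} ⊆ I with f(J_i) = J_{(i+1) mod n} for i = 0, …, n-1, such that, setting E = J_0 ∪ … ∪ J_{n-1}, the restriction f|_E is topologically transitive with a dense set of periodic points, and for each i = 0, …, n-1 the restriction of f^n to J_i is topologically transitive with a dense set of periodic points. -/

import Mathlib

open Set Topology Function


/-- A self-map of a topological space is topologically transitive if for any two
nonempty open sets `U, V` some iterate image of `U` meets `V`. -/
def TopTransitive {Y : Type*} [TopologicalSpace Y] (g : Y → Y) : Prop :=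
  ∀ U V : Set Y, IsOpen U → IsOpen V → U.Nonempty → V.Nonempty →
    ∃ k : ℕ, (g^[k] '' U ∩ V).Nonempty

/-- A self-map is strongly indecomposable if for every sequence of invariant closed
sets with nonempty interior, the intersection has nonempty interior. -/
def StronglyIndecomposable {Y : Type*} [TopologicalSpace Y] (g : Y → Y) : Prop :=
  ∀ A : ℕ → Set Y, (∀ n, IsClosed (A n)) → (∀ n, g '' A n ⊆ A n) →
    (∀ n, (interior (A n)).Nonempty) → (interior (⋂ n, A n)).Nonempty

/-- The periodic points of `g` are dense. -/
def DensePeriodicPts {Y : Type*} [TopologicalSpace Y] (g : Y → Y) : Prop :=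
  Dense {x : Y | ∃ k : ℕ, 1 ≤ k ∧ g^[k] x = x}

namespace SIW


variable {a b : ℝ}



lemma val_image_Icc (x y : Set.Icc a b) : Subtype.val '' (Icc x y) = Icc (x:ℝ) (y:ℝ) := by
  ext z
  constructor
  · rintro ⟨w, ⟨h1, h2⟩, rfl⟩
    exact ⟨h1, h2⟩
  · rintro ⟨h1, h2⟩
    have hz : z ∈ Set.Icc a b := ⟨x.2.1.trans h1, h2.trans y.2.2⟩
    exact ⟨⟨z, hz⟩, ⟨h1, h2⟩, rfl⟩

lemma preconn_Icc (x y : Set.Icc a b) : IsPreconnected (Icc x y) := by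
  rw [← Topology.IsInducing.subtypeVal.isPreconnected_image, val_image_Icc]
  exact isPreconnected_Icc

lemma isOpen_IooX (x y : Set.Icc a b) : IsOpen (Ioo x y) := by
  have : Ioo x y = Subtype.val ⁻¹' (Ioo (x:ℝ) (y:ℝ)) := by
    ext z; simp [Subtype.coe_lt_coe]
  rw [this]
  exact isOpen_Ioo.preimage continuous_subtype_val

lemma isClosed_IccX (x y : Set.Icc a b) : IsClosed (Icc x y) := by
  have : Icc x y = Subtype.val ⁻¹' (Icc (x:ℝ) (y:ℝ)) := by
    ext z; simp [ Subtype.coe_le_coe]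
  rw [this]
  exact isClosed_Icc.preimage continuous_subtype_val

lemma isClosed_IciX (x : Set.Icc a b) : IsClosed (Ici x) := by
  have : Ici x = Subtype.val ⁻¹' (Ici (x:ℝ)) := by
    ext z; simp [Subtype.coe_le_coe]
  rw [this]
  exact isClosed_Ici.preimage continuous_subtype_val

lemma isClosed_IicX (x : Set.Icc a b) : IsClosed (Iic x) := by
  have : Iic x = Subtype.val ⁻¹' (Iic (x:ℝ)) := by
    ext z; simp [Subtype.coe_le_coe]
  rw [this]
  exact isClosed_Iic.preimage continuous_subtype_val

lemma exists_btw (x y : Set.Icc a b) (h : x < y) : ∃ z, x < z ∧ z < y := by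
  obtain ⟨w, hw1, hw2⟩ := exists_between (Subtype.coe_lt_coe.2 h)
  exact ⟨⟨w, ⟨x.2.1.trans hw1.le, hw2.le.trans y.2.2⟩⟩, hw1, hw2⟩

/-- every nonempty open set in `X` contains a nondegenerate closed interval -/
lemma exists_Icc_subset (hab : a < b) {O : Set (Set.Icc a b)} (hO : IsOpen O) (hne : O.Nonempty) :
    ∃ x y : Set.Icc a b, x < y ∧ Icc x y ⊆ O := by
  obtain ⟨⟨u, hu⟩, huO⟩ := hne
  obtain ⟨t, ht, rfl⟩ := isOpen_induced_iff.1 hO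
  obtain ⟨ε, hε, hball⟩ := Metric.isOpen_iff.1 ht u huO
  have h1 : max a (u - ε/2) < min b (u + ε/2) := by
    apply max_lt <;> apply lt_min
    · exact hab
    · exact lt_of_le_of_lt hu.1 (by linarith)
    · exact lt_of_lt_of_le (by linarith) hu.2
    · linarith
  have hx : max a (u - ε/2) ∈ Set.Icc a b := ⟨le_max_left _ _, (le_min_iff.1 h1.le).1⟩
  have hy : min b (u + ε/2) ∈ Set.Icc a b := ⟨(max_le_iff.1 h1.le).1, min_le_left _ _⟩
  refine ⟨⟨_, hx⟩, ⟨_, hy⟩, h1, ?_⟩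
  rintro ⟨z, hz⟩ ⟨hz1, hz2⟩
  apply hball
  rw [Metric.mem_ball, Real.dist_eq, abs_lt]
  have c1 : max a (u - ε/2) ≤ z := hz1
  have c2 : z ≤ min b (u + ε/2) := hz2
  have := le_max_right a (u - ε/2)
  have := min_le_right b (u + ε/2)
  constructor <;> linarith


section Dyn

variable {f : Set.Icc a b → Set.Icc a b}

/-- family of closed invariant sets with nonempty interior -/
def Fam (f : Set.Icc a b → Set.Icc a b) : Set (Set (Set.Icc a b)) :=
  {A | IsClosed A ∧ f '' A ⊆ A ∧ (interior A).Nonempty}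

/-- the minimal closed invariant set with nonempty interior -/
def Mset (f : Set.Icc a b → Set.Icc a b) : Set (Set.Icc a b) := ⋂₀ Fam f

lemma univ_mem_Fam (hab : a < b) : (univ : Set (Set.Icc a b)) ∈ Fam f := by
  refine ⟨isClosed_univ, subset_univ _, ?_⟩
  rw [interior_univ]
  have : Nonempty (Set.Icc a b) := Nonempty.to_subtype (nonempty_Icc.2 hab.le)
  exact univ_nonempty

lemma Mset_min {A : Set (Set.Icc a b)} (hA : A ∈ Fam f) : Mset f ⊆ A :=
  sInter_subset_of_mem hA

lemma Mset_closed : IsClosed (Mset f) :=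
  isClosed_sInter fun _ hA => hA.1

lemma Mset_inv : f '' Mset f ⊆ Mset f := by
  rintro y ⟨x, hx, rfl⟩ A hA
  exact hA.2.1 ⟨x, hx A hA, rfl⟩

lemma Mset_mem (hab : a < b) (hstr : StronglyIndecomposable f) :
    Mset f ∈ Fam f := by
  obtain ⟨T, Tc, TS, hT⟩ := TopologicalSpace.isOpen_sUnion_countable
      (compl '' Fam f) (by rintro s ⟨A, hA, rfl⟩; exact hA.1.isOpen_compl)
  set G : Set (Set (Set.Icc a b)) := insert univ (compl '' T) with hG
  have hGFam : G ⊆ Fam f := by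
    rintro A (rfl | ⟨t, ht, rfl⟩)
    · exact univ_mem_Fam hab
    · obtain ⟨B, hB, rfl⟩ := TS ht
      rwa [compl_compl]
  have hGc : G.Countable := (Tc.image _).insert _
  obtain ⟨A, hA⟩ := hGc.exists_eq_range ⟨univ, mem_insert _ _⟩
  have hinter : ⋂ n, A n = Mset f := by
    have h1 : ⋂ n, A n = ⋂₀ G := by rw [hA, sInter_range]
    have e2 : Mset f = (⋃₀ (compl '' Fam f))ᶜ := by
      rw [compl_sUnion, compl_compl_image]; rfl
    have e1 : ⋂₀ G = (⋃₀ T)ᶜ := by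
      rw [hG, sInter_insert, univ_inter, ← compl_sUnion]
    rw [h1, e1, hT, ← e2]
  have hmem : ∀ n, A n ∈ Fam f := fun n => hGFam (hA ▸ mem_range_self n)
  have hint := hstr A (fun n => (hmem n).1) (fun n => (hmem n).2.1) (fun n => (hmem n).2.2)
  exact ⟨Mset_closed, Mset_inv, hinter ▸ hint⟩

lemma Mset_int_ne (hab : a < b) (hstr : StronglyIndecomposable f) :
    (interior (Mset f)).Nonempty := (Mset_mem hab hstr).2.2

lemma cont_iter (hf : Continuous f) (k : ℕ) : Continuous (f^[k]) := hf.iterate k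

/-- image of closure equals closure of image (compactness) -/
lemma image_closure_eq (hf : Continuous f) (S : Set (Set.Icc a b)) :
    f '' closure S = closure (f '' S) := by
  apply Subset.antisymm (image_closure_subset_closure_image hf)
  apply closure_minimal (image_mono (f := f) subset_closure)
  exact (isClosed_closure.isCompact.image hf).isClosed

/-- the orbit of `U ∩ Mset f` is dense in `Mset f` -/
lemma orbit_dense (hab : a < b) (hf : Continuous f) (hstr : StronglyIndecomposable f)
    {U : Set (Set.Icc a b)} (hU : IsOpen U) (hne : (U ∩ interior (Mset f)).Nonempty) :
    Mset f ⊆ closure (⋃ k, f^[k] '' (U ∩ Mset f)) := by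
  apply Mset_min
  refine ⟨isClosed_closure, ?_, ?_⟩
  · refine (image_closure_subset_closure_image hf).trans (closure_mono ?_)
    rw [image_iUnion]
    refine iUnion_subset fun k => ?_
    rw [← image_comp, ← Function.iterate_succ']
    exact subset_iUnion (fun k => f^[k] '' (U ∩ Mset f)) (k+1)
  · refine hne.mono ?_
    rw [(hU.inter isOpen_interior).subset_interior_iff]
    refine subset_trans ?_ subset_closure
    refine subset_trans ?_ (subset_iUnion (fun k => f^[k] '' (U ∩ Mset f)) 0)
    simp only [Function.iterate_zero, image_id]
    exact inter_subset_inter_right U interior_subset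


lemma ordConn_of_preconn {S : Set (Set.Icc a b)} (hS : IsPreconnected S) : S.OrdConnected := by
  have h2 : IsPreconnected (Subtype.val '' S) :=
    (Topology.IsInducing.subtypeVal.isPreconnected_image).2 hS
  have h3 : (Subtype.val '' S).OrdConnected := h2.ordConnected
  constructor
  intro x hx y hy z hz
  have : (z : ℝ) ∈ Subtype.val '' S :=
    h3.out (mem_image_of_mem _ hx) (mem_image_of_mem _ hy) ⟨hz.1, hz.2⟩
  obtain ⟨w, hw, hwz⟩ := this
  exact (Subtype.ext hwz : w = z) ▸ hw

lemma not_finite_of_Icc_subset {P : Set (Set.Icc a b)} {q₁ q₂ : Set.Icc a b}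
    (h : q₁ < q₂) (hsub : Icc q₁ q₂ ⊆ P) : ¬ P.Finite := by
  intro hP
  have h1 : (Subtype.val '' P).Finite := hP.image _
  have h2 : (Icc (q₁:ℝ) (q₂:ℝ)).Infinite := Set.Icc_infinite h
  have h3 : Icc (q₁:ℝ) (q₂:ℝ) ⊆ Subtype.val '' P := by
    rw [← val_image_Icc q₁ q₂]
    exact image_mono hsub
  exact h2 (h1.subset h3)

lemma iter_mem_Mset {x : Set.Icc a b} (hx : x ∈ Mset f) (k : ℕ) : f^[k] x ∈ Mset f := by
  induction k with
  | zero => exact hx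
  | succ n ih => rw [Function.iterate_succ_apply']; exact Mset_inv ⟨_, ih, rfl⟩

/-- closure of the forward orbit -/
def Orb (f : Set.Icc a b → Set.Icc a b) (p : Set.Icc a b) : Set (Set.Icc a b) :=
  closure (range fun j => f^[j] p)

lemma Orb_inv (hf : Continuous f) (p : Set.Icc a b) : f '' Orb f p ⊆ Orb f p := by
  refine (image_closure_subset_closure_image hf).trans (closure_mono ?_)
  rintro y ⟨x, ⟨j, rfl⟩, rfl⟩
  exact ⟨j+1, by simp [Function.iterate_succ_apply']⟩

lemma Orb_iter_inv (hf : Continuous f) (p : Set.Icc a b) (k : ℕ) :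
    f^[k] '' Orb f p ⊆ Orb f p := by
  induction k with
  | zero => simp
  | succ n ih =>
      rw [Function.iterate_succ', image_comp]
      exact (image_mono (f := f) ih).trans (Orb_inv hf p)

lemma Orb_mem (p : Set.Icc a b) : p ∈ Orb f p :=
  subset_closure ⟨0, rfl⟩

lemma Orb_sub_Mset (hp : p ∈ Mset f) : Orb f p ⊆ Mset f := by
  refine closure_minimal ?_ Mset_closed
  rintro y ⟨j, rfl⟩
  exact iter_mem_Mset hp j

/-- no collapse: `f` cannot map a nondegenerate subinterval of `Mset f` to a point -/
lemma no_collapse (hab : a < b) (hf : Continuous f) (hstr : StronglyIndecomposable f)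
    {J' : Set (Set.Icc a b)} (hcl : IsClosed J') (hoc : J'.OrdConnected)
    (hsub : J' ⊆ Mset f) {u v : Set.Icc a b} (hu : u ∈ J') (hv : v ∈ J') (huv : u < v)
    {p : Set.Icc a b} (hcoll : f '' J' ⊆ {p}) : False := by
  have hmem : ∀ t : ℝ, (u:ℝ) ≤ t → t ≤ (v:ℝ) → t ∈ Set.Icc a b :=
    fun t h1 h2 => ⟨u.2.1.trans h1, h2.trans v.2.2⟩
  have huvR : (u:ℝ) < (v:ℝ) := huv
  set m : ℝ := ((u:ℝ) + (v:ℝ))/2 with hm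
  set δ : ℝ := ((v:ℝ) - (u:ℝ))/4 with hδ
  have hδpos : 0 < δ := by rw [hδ]; linarith
  have hbounds : ∀ i : ℕ, (u:ℝ) < m - δ/(i+1) ∧ m - δ/(i+1) < m + δ/(i+1) ∧ m + δ/(i+1) < (v:ℝ) := by
    intro i
    have h1 : (0:ℝ) < i + 1 := by positivity
    have h2 : δ/(i+1) ≤ δ := by
      rw [div_le_iff₀ h1]; nlinarith
    have h3 : 0 < δ/(i+1) := by positivity
    refine ⟨by rw [hm, hδ] at *; nlinarith, by linarith, by rw [hm, hδ] at *; nlinarith⟩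
  -- subtype points
  have hxmem : ∀ i : ℕ, m - δ/(i+1) ∈ Set.Icc a b := fun i =>
    hmem _ (hbounds i).1.le (by have := (hbounds i).2.1; have := (hbounds i).2.2; linarith)
  have hymem : ∀ i : ℕ, m + δ/(i+1) ∈ Set.Icc a b := fun i =>
    hmem _ (by have := (hbounds i).1; have := (hbounds i).2.1; linarith) (hbounds i).2.2.le
  set xs : ℕ → Set.Icc a b := fun i => ⟨m - δ/(i+1), hxmem i⟩ with hxs
  set ys : ℕ → Set.Icc a b := fun i => ⟨m + δ/(i+1), hymem i⟩ with hys
  have hxy : ∀ i, xs i < ys i := fun i => Subtype.coe_lt_coe.1 (hbounds i).2.1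
  have hIccJ : ∀ i, Icc (xs i) (ys i) ⊆ J' := by
    intro i z hz
    have hxJ : xs i ∈ J' := hoc.out hu hv ⟨(hbounds i).1.le, by
      have := (hbounds i).2.1; have := (hbounds i).2.2
      show (m - δ/(i+1) : ℝ) ≤ (v:ℝ); linarith⟩
    have hyJ : ys i ∈ J' := hoc.out hu hv ⟨by
      have := (hbounds i).1; have := (hbounds i).2.1
      show (u:ℝ) ≤ (m + δ/(i+1) : ℝ); linarith, (hbounds i).2.2.le⟩
    exact hoc.out hxJ hyJ hz
  set P : Set (Set.Icc a b) := Orb f p with hP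
  have hpu : f u = p := mem_singleton_iff.1 (hcoll (mem_image_of_mem f hu))
  have hpMset : p ∈ Mset f := hpu ▸ Mset_inv ⟨u, hsub hu, rfl⟩
  have hPM : P ⊆ Mset f := Orb_sub_Mset hpMset
  set A : ℕ → Set (Set.Icc a b) := fun i => Icc (xs i) (ys i) ∪ P with hA
  have hint := hstr A (fun i => (isClosed_IccX _ _).union isClosed_closure)
    (by
      intro i
      rw [hA]
      simp only [image_union]
      apply union_subset
      · refine subset_trans ?_ (subset_union_right)
        refine subset_trans (image_mono (f := f) (hIccJ i)) ?_
        refine subset_trans hcoll ?_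
        intro y hy
        exact (mem_singleton_iff.1 hy) ▸ Orb_mem p
      · exact (Orb_inv hf p).trans subset_union_right)
    (by
      intro i
      obtain ⟨z, hz1, hz2⟩ := exists_btw _ _ (hxy i)
      refine ⟨z, ?_⟩
      rw [hA]
      have : Ioo (xs i) (ys i) ⊆ interior (Icc (xs i) (ys i) ∪ P) := by
        rw [(isOpen_IooX _ _).subset_interior_iff]
        exact (Ioo_subset_Icc_self).trans subset_union_left
      exact this ⟨hz1, hz2⟩)
  -- ⋂ A i ⊆ {w} ∪ P
  set w : Set.Icc a b := ⟨m, hmem m (by rw [hm]; linarith) (by rw [hm]; linarith)⟩ with hw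
  have hsub2 : (⋂ i, A i) ⊆ {w} ∪ P := by
    intro z hz
    by_cases hzP : z ∈ P
    · exact Or.inr hzP
    · left
      have hzi : ∀ i : ℕ, z ∈ Icc (xs i) (ys i) := by
        intro i
        rcases (mem_iInter.1 hz i) with h | h
        · exact h
        · exact absurd h hzP
      have : ∀ i : ℕ, |(z:ℝ) - m| ≤ δ/(i+1) := by
        intro i
        obtain ⟨h1, h2⟩ := hzi i
        rw [abs_le]
        constructor
        · have : (m - δ/(i+1) : ℝ) ≤ (z:ℝ) := h1
          linarith
        · have : (z:ℝ) ≤ (m + δ/(i+1) : ℝ) := h2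
          linarith
      have hzm : (z:ℝ) = m := by
        by_contra hne
        have hpos : 0 < |(z:ℝ) - m| := abs_pos.2 (sub_ne_zero.2 hne)
        obtain ⟨n, hn⟩ := exists_nat_gt (δ / |(z:ℝ) - m|)
        have h1 : δ / |(z:ℝ) - m| < n + 1 := hn.trans (by linarith)
        have h2 : δ < |(z:ℝ) - m| * (n+1) := by
          rwa [div_lt_iff₀ hpos, mul_comm] at h1
        have h3 := this n
        rw [le_div_iff₀ (by positivity : (0:ℝ) < n+1)] at h3
        linarith
      exact show z = w from Subtype.ext hzm
  obtain ⟨O, hOopen, hOne, hOsub⟩ : ∃ O : Set (Set.Icc a b), IsOpen O ∧ O.Nonempty ∧ O ⊆ {w} ∪ P := by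
    obtain ⟨z, hz⟩ := hint
    exact ⟨interior (⋂ i, A i), isOpen_interior, ⟨z, hz⟩, interior_subset.trans hsub2⟩
  obtain ⟨s, t, hst, hstO⟩ := exists_Icc_subset hab hOopen hOne
  -- find a nondegenerate interval inside P
  have hstR : (s:ℝ) < (t:ℝ) := hst
  set m1 : ℝ := (2*(s:ℝ) + (t:ℝ))/3 with hm1
  set m2 : ℝ := ((s:ℝ) + 2*(t:ℝ))/3 with hm2
  have hsm1 : (s:ℝ) < m1 := by rw [hm1]; linarith
  have hm1m2 : m1 < m2 := by rw [hm1, hm2]; linarith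
  have hm2t : m2 < (t:ℝ) := by rw [hm2]; linarith
  have hmemst : ∀ r : ℝ, (s:ℝ) ≤ r → r ≤ (t:ℝ) → r ∈ Set.Icc a b :=
    fun r h1 h2 => ⟨s.2.1.trans h1, h2.trans t.2.2⟩
  obtain ⟨q₁, q₂, hq, hq1s, hq2t, havoid⟩ :
      ∃ q₁ q₂ : Set.Icc a b, q₁ < q₂ ∧ s ≤ q₁ ∧ q₂ ≤ t ∧ ∀ z ∈ Icc q₁ q₂, z ≠ w := by
    by_cases hcase : (w:ℝ) < m2
    · refine ⟨⟨m2, hmemst m2 (by linarith) hm2t.le⟩, t, Subtype.coe_lt_coe.1 hm2t,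
        show (s:ℝ) ≤ m2 by linarith, le_refl t, ?_⟩
      intro z hz hzw
      have : m2 ≤ (z:ℝ) := hz.1
      rw [hzw] at this
      linarith
    · push_neg at hcase
      refine ⟨s, ⟨m1, hmemst m1 hsm1.le (by linarith)⟩, Subtype.coe_lt_coe.1 hsm1,
        le_refl s, show m1 ≤ (t:ℝ) by linarith, ?_⟩
      intro z hz hzw
      have : (z:ℝ) ≤ m1 := hz.2
      rw [hzw] at this
      linarith
  have hqP : Icc q₁ q₂ ⊆ P := by
    intro z hz
    have hzst : z ∈ Icc s t := ⟨hq1s.trans hz.1, hz.2.trans hq2t⟩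
    rcases hOsub (hstO hzst) with h | h
    · exact absurd h (havoid z hz)
    · exact h
  -- now Mset f ⊆ P
  have hMP : Mset f ⊆ P := by
    have hdense := orbit_dense hab hf hstr (isOpen_IooX q₁ q₂) (by
      obtain ⟨z, hz1, hz2⟩ := exists_btw _ _ hq
      refine ⟨z, ⟨hz1, hz2⟩, ?_⟩
      have : Ioo q₁ q₂ ⊆ interior (Mset f) := by
        rw [(isOpen_IooX _ _).subset_interior_iff]
        exact (Ioo_subset_Icc_self.trans hqP).trans hPM
      exact this ⟨hz1, hz2⟩)
    refine hdense.trans ?_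
    have : (⋃ k, f^[k] '' (Ioo q₁ q₂ ∩ Mset f)) ⊆ P := by
      refine iUnion_subset fun k => ?_
      refine subset_trans (image_mono ((inter_subset_left).trans
        (Ioo_subset_Icc_self.trans hqP))) ?_
      exact Orb_iter_inv hf p k
    exact (closure_mono this).trans (isClosed_closure.closure_subset)
  -- orbit visits Ioo u v ⊆ J', so p is periodic
  obtain ⟨z0, hz01, hz02⟩ := exists_btw _ _ huv
  have hz0J : z0 ∈ closure (range fun j => f^[j] p) := hMP (hsub (hoc.out hu hv ⟨hz01.le, hz02.le⟩))
  have : ∃ j, f^[j] p ∈ Ioo u v := by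
    have := mem_closure_iff.1 hz0J (Ioo u v) (isOpen_IooX u v) ⟨hz01, hz02⟩
    obtain ⟨y, hy1, ⟨j, rfl⟩⟩ := this
    exact ⟨j, hy1⟩
  obtain ⟨j, hj⟩ := this
  have hper : f^[j+1] p = p := by
    have h1 : f^[j] p ∈ J' := hoc.out hu hv ⟨hj.1.le, hj.2.le⟩
    have h2 : f (f^[j] p) ∈ f '' J' := mem_image_of_mem f h1
    have := hcoll h2
    rw [Function.iterate_succ_apply']
    exact this
  -- range of iterates is finite
  have hfin : (range fun j => f^[j] p).Finite := by
    have hperiodic : Function.IsPeriodicPt f (j+1) p := hper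
    have : (range fun k => f^[k] p) ⊆ (fun k => f^[k] p) '' (Iio (j+1)) := by
      rintro y ⟨k, rfl⟩
      refine ⟨k % (j+1), Nat.mod_lt _ (Nat.succ_pos j), ?_⟩
      exact hperiodic.iterate_mod_apply k
    exact Finite.subset ((finite_Iio _).image _) this
  have hPfin : P.Finite := by
    rw [hP, Orb, hfin.isClosed.closure_eq]
    exact hfin
  exact not_finite_of_Icc_subset hq hqP hPfin


lemma mem_closure_IooX_left {z w : Set.Icc a b} (h : z < w) : z ∈ closure (Ioo z w) := by
  rw [mem_closure_iff]
  intro O hO hzO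
  obtain ⟨t, ht, rfl⟩ := isOpen_induced_iff.1 hO
  obtain ⟨ε, hε, hball⟩ := Metric.isOpen_iff.1 ht _ hzO
  have hzw : (z:ℝ) < (w:ℝ) := h
  set r : ℝ := min ((z:ℝ) + ε/2) (((z:ℝ)+(w:ℝ))/2) with hr
  have h1 : (z:ℝ) < r := lt_min (by linarith) (by linarith)
  have h2 : r < (w:ℝ) := min_lt_iff.2 (Or.inr (by linarith))
  have hrmem : r ∈ Set.Icc a b := ⟨z.2.1.trans h1.le, h2.le.trans w.2.2⟩
  refine ⟨⟨r, hrmem⟩, ?_, h1, h2⟩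
  apply hball
  rw [Metric.mem_ball, Real.dist_eq, abs_lt]
  have h3 : r ≤ (z:ℝ) + ε/2 := min_le_left _ _
  exact ⟨by linarith, by linarith⟩

lemma mem_closure_IooX_right {z w : Set.Icc a b} (h : z < w) : w ∈ closure (Ioo z w) := by
  rw [mem_closure_iff]
  intro O hO hzO
  obtain ⟨t, ht, rfl⟩ := isOpen_induced_iff.1 hO
  obtain ⟨ε, hε, hball⟩ := Metric.isOpen_iff.1 ht _ hzO
  have hzw : (z:ℝ) < (w:ℝ) := h
  set r : ℝ := max ((w:ℝ) - ε/2) (((z:ℝ)+(w:ℝ))/2) with hr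
  have h1 : r < (w:ℝ) := max_lt (by linarith) (by linarith)
  have h2 : (z:ℝ) < r := lt_max_iff.2 (Or.inr (by linarith))
  have hrmem : r ∈ Set.Icc a b := ⟨z.2.1.trans h2.le, h1.le.trans w.2.2⟩
  refine ⟨⟨r, hrmem⟩, ?_, h2, h1⟩
  apply hball
  rw [Metric.mem_ball, Real.dist_eq, abs_lt]
  have h3 : (w:ℝ) - ε/2 ≤ r := le_max_left _ _
  exact ⟨by linarith, by linarith⟩

/-- a preconnected nondegenerate subset of `Mset f` lies in the closure of the interior -/
lemma sub_closure_interior {S : Set (Set.Icc a b)} (hS : S ⊆ Mset f) (hpc : IsPreconnected S)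
    {u v : Set.Icc a b} (hu : u ∈ S) (hv : v ∈ S) (huv : u < v) :
    S ⊆ closure (interior (Mset f)) := by
  have hoc := ordConn_of_preconn hpc
  intro z hz
  by_cases hzv : z < v
  · have hsub : Ioo z v ⊆ interior (Mset f) := by
      rw [(isOpen_IooX _ _).subset_interior_iff]
      intro y hy
      exact hS (hoc.out hz hv ⟨hy.1.le, hy.2.le⟩)
    exact closure_mono hsub (mem_closure_IooX_left hzv)
  · have huz : u < z := huv.trans_le (not_lt.1 hzv)
    have hsub : Ioo u z ⊆ interior (Mset f) := by
      rw [(isOpen_IooX _ _).subset_interior_iff]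
      intro y hy
      exact hS (hoc.out hu hz ⟨hy.1.le, hy.2.le⟩)
    exact closure_mono hsub (mem_closure_IooX_right huz)

section Iksec

variable (f) in
/-- closure of the k-th image of the base interval -/
def Ik (α₀ β₀ : Set.Icc a b) (k : ℕ) : Set (Set.Icc a b) :=
  closure (f^[k] '' Icc α₀ β₀)

variable {α₀ β₀ : Set.Icc a b}

lemma Ik_closed (k : ℕ) : IsClosed (Ik f α₀ β₀ k) := isClosed_closure

lemma Ik_sub (hbase : Icc α₀ β₀ ⊆ Mset f) (k : ℕ) : Ik f α₀ β₀ k ⊆ Mset f := by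
  refine closure_minimal ?_ Mset_closed
  rintro y ⟨x, hx, rfl⟩
  exact iter_mem_Mset (hbase hx) k

lemma Ik_preconn (hf : Continuous f) (k : ℕ) : IsPreconnected (Ik f α₀ β₀ k) :=
  ((preconn_Icc α₀ β₀).image _ (cont_iter hf k).continuousOn).closure

lemma Ik_mem (hαβ : α₀ ≤ β₀) (k : ℕ) : f^[k] α₀ ∈ Ik f α₀ β₀ k :=
  subset_closure (mem_image_of_mem _ (left_mem_Icc.2 hαβ))

lemma Ik_image (hf : Continuous f) (k : ℕ) :
    f '' Ik f α₀ β₀ k = Ik f α₀ β₀ (k+1) := by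
  rw [Ik, image_closure_eq hf, ← image_comp, ← Function.iterate_succ']
  rfl

lemma Ik_nondeg (hab : a < b) (hf : Continuous f) (hstr : StronglyIndecomposable f)
    (hαβ : α₀ < β₀) (hbase : Icc α₀ β₀ ⊆ Mset f) (k : ℕ) :
    ∃ u ∈ Ik f α₀ β₀ k, ∃ v ∈ Ik f α₀ β₀ k, u < v := by
  induction k with
  | zero =>
      refine ⟨α₀, ?_, β₀, ?_, hαβ⟩
      · exact subset_closure (by simpa using left_mem_Icc.2 hαβ.le)
      · exact subset_closure (by simpa using right_mem_Icc.2 hαβ.le)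
  | succ k ih =>
      by_contra hcon
      push_neg at hcon
      set p : Set.Icc a b := f^[k+1] α₀ with hp
      have hpmem : p ∈ Ik f α₀ β₀ (k+1) := Ik_mem hαβ.le (k+1)
      have hsing : Ik f α₀ β₀ (k+1) ⊆ {p} := by
        intro y hy
        have h1 := hcon y hy p hpmem
        have h2 := hcon p hpmem y hy
        exact le_antisymm h2 h1
      obtain ⟨u, hu, v, hv, huv⟩ := ih
      exact no_collapse hab hf hstr (Ik_closed k)
        (ordConn_of_preconn (Ik_preconn hf k)) (Ik_sub hbase k) hu hv huv
        ((Ik_image hf k) ▸ hsing)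

lemma tail_dense (hab : a < b) (hf : Continuous f) (hstr : StronglyIndecomposable f)
    (hαβ : α₀ < β₀) (hbase : Icc α₀ β₀ ⊆ Mset f) (m : ℕ) :
    Mset f ⊆ closure (⋃ k, f^[m+k] '' Icc α₀ β₀) := by
  apply Mset_min
  refine ⟨isClosed_closure, ?_, ?_⟩
  · refine (image_closure_subset_closure_image hf).trans (closure_mono ?_)
    rw [image_iUnion]
    refine iUnion_subset fun k => ?_
    rw [← image_comp, ← Function.iterate_succ']
    exact subset_iUnion (fun k => f^[m+k] '' Icc α₀ β₀) (k+1)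
  · obtain ⟨u, hu, v, hv, huv⟩ := Ik_nondeg hab hf hstr hαβ hbase m
    obtain ⟨z, hz1, hz2⟩ := exists_btw _ _ huv
    refine ⟨z, ?_⟩
    have hIoo : Ioo u v ⊆ closure (⋃ k, f^[m+k] '' Icc α₀ β₀) := by
      have h1 : Icc u v ⊆ Ik f α₀ β₀ m :=
        (ordConn_of_preconn (Ik_preconn hf m)).out hu hv
      have h2 : Ik f α₀ β₀ m ⊆ closure (⋃ k, f^[m+k] '' Icc α₀ β₀) := by
        refine closure_mono ?_
        have : m + 0 = m := by ring
        exact this ▸ subset_iUnion (fun k => f^[m+k] '' Icc α₀ β₀) 0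
      exact (Ioo_subset_Icc_self.trans h1).trans h2
    exact ((isOpen_IooX u v).subset_interior_iff.2 hIoo) ⟨hz1, hz2⟩

end Iksec

lemma next_inj {n : ℕ} {m i : ℕ} (hm : m < n) (hi : i < n)
    (h : (m+1) % n = (i+1) % n) : m = i := by
  have h1 : m + 1 ≤ n := hm
  have h2 : i + 1 ≤ n := hi
  rcases eq_or_lt_of_le h1 with e1 | l1 <;> rcases eq_or_lt_of_le h2 with e2 | l2
  · omega
  · rw [e1, Nat.mod_self, Nat.mod_eq_of_lt l2] at h; omega
  · rw [e2, Nat.mod_self, Nat.mod_eq_of_lt l1] at h; omega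
  · rw [Nat.mod_eq_of_lt l1, Nat.mod_eq_of_lt l2] at h; omega

section Cksec

variable (f) in
/-- connected component of the k-th iterate of the base point -/
def CkC (x₀ : Set.Icc a b) (k : ℕ) : Set (Set.Icc a b) :=
  connectedComponentIn (Mset f) (f^[k] x₀)

variable {x₀ : Set.Icc a b}

lemma Ck_sub (k : ℕ) : CkC f x₀ k ⊆ Mset f := connectedComponentIn_subset _ _

lemma Ck_closed (hx : x₀ ∈ Mset f) (k : ℕ) : IsClosed (CkC f x₀ k) := by
  apply isClosed_of_closure_subset
  apply IsPreconnected.subset_connectedComponentIn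
    (isPreconnected_connectedComponentIn.closure)
  · exact subset_closure (mem_connectedComponentIn (iter_mem_Mset hx k))
  · exact closure_minimal (connectedComponentIn_subset _ _) Mset_closed

lemma f_image_Ck (hf : Continuous f) (hx : x₀ ∈ Mset f) (k : ℕ) :
    f '' CkC f x₀ k ⊆ CkC f x₀ (k+1) := by
  apply IsPreconnected.subset_connectedComponentIn
  · exact isPreconnected_connectedComponentIn.image f hf.continuousOn
  · exact ⟨f^[k] x₀, mem_connectedComponentIn (iter_mem_Mset hx k),
      (Function.iterate_succ_apply' f k x₀).symm⟩
  · rintro y ⟨z, hz, rfl⟩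
    exact Mset_inv ⟨z, Ck_sub k hz, rfl⟩

lemma Ck_step (hf : Continuous f) (hx : x₀ ∈ Mset f) {s t : ℕ}
    (h : CkC f x₀ s = CkC f x₀ t) : CkC f x₀ (s+1) = CkC f x₀ (t+1) := by
  have h1 : f^[t+1] x₀ ∈ CkC f x₀ (s+1) := by
    apply f_image_Ck hf hx s
    refine ⟨f^[t] x₀, ?_, (Function.iterate_succ_apply' f t x₀).symm⟩
    rw [h]
    exact mem_connectedComponentIn (iter_mem_Mset hx t)
  exact connectedComponentIn_eq h1

lemma Ck_step_iter (hf : Continuous f) (hx : x₀ ∈ Mset f) {s t : ℕ}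
    (h : CkC f x₀ s = CkC f x₀ t) (m : ℕ) : CkC f x₀ (s+m) = CkC f x₀ (t+m) := by
  induction m with
  | zero => exact h
  | succ k ih => exact Ck_step hf hx ih

lemma Ck_eq_or_disjoint (s t : ℕ) :
    CkC f x₀ s = CkC f x₀ t ∨ Disjoint (CkC f x₀ s) (CkC f x₀ t) := by
  rcases (CkC f x₀ s ∩ CkC f x₀ t).eq_empty_or_nonempty with h | ⟨z, hz1, hz2⟩
  · exact Or.inr (disjoint_iff_inter_eq_empty.2 h)
  · left
    exact (connectedComponentIn_eq hz1).trans (connectedComponentIn_eq hz2).symm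

end Cksec

/-- the cycle of components structure -/
lemma cycle_structure (hab : a < b) (hf : Continuous f) (hstr : StronglyIndecomposable f) :
    ∃ n : ℕ, ∃ hn : 0 < n, ∃ D : Fin n → Set (Set.Icc a b),
      (∀ i, IsClosed (D i)) ∧
      (∀ i, IsPreconnected (D i)) ∧
      (∀ i, ∃ u ∈ D i, ∃ v ∈ D i, u < v) ∧
      (∀ i j : Fin n, i ≠ j → Disjoint (D i) (D j)) ∧
      ((⋃ i, D i) = Mset f) ∧
      (∀ i : Fin n, f '' D i = D ⟨((i:ℕ)+1) % n, Nat.mod_lt _ hn⟩) := by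
  classical
  obtain ⟨α₀, β₀, hαβ, hbase⟩ := exists_Icc_subset hab isOpen_interior (Mset_int_ne hab hstr)
  have hbaseM : Icc α₀ β₀ ⊆ Mset f := hbase.trans interior_subset
  have hx₀ : α₀ ∈ Mset f := hbaseM (left_mem_Icc.2 hαβ.le)
  set C : ℕ → Set (Set.Icc a b) := CkC f α₀ with hC
  have hIC : ∀ k, Ik f α₀ β₀ k ⊆ C k := fun k =>
    (Ik_preconn hf k).subset_connectedComponentIn (Ik_mem hαβ.le k) (Ik_sub hbaseM k)
  have hjl : ∃ j l, j < l ∧ C j = C l := by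
    by_contra hcon
    push_neg at hcon
    have hdisj : ∀ k, 1 ≤ k → Disjoint (C 0) (C k) := by
      intro k hk
      rcases Ck_eq_or_disjoint 0 k with h | h
      · exact absurd h (hcon 0 k hk)
      · exact h
    have hdense := tail_dense hab hf hstr hαβ hbaseM 1
    obtain ⟨z, hz1, hz2⟩ := exists_btw _ _ hαβ
    have hzM : z ∈ Mset f := hbaseM ⟨hz1.le, hz2.le⟩
    have hzcl := hdense hzM
    rw [mem_closure_iff] at hzcl
    obtain ⟨y, hy1, hy2⟩ := hzcl (Ioo α₀ β₀) (isOpen_IooX _ _) ⟨hz1, hz2⟩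
    obtain ⟨k, hk⟩ := mem_iUnion.1 hy2
    have hyC : y ∈ C (1+k) := hIC (1+k) (subset_closure hk)
    have hyC0 : y ∈ C 0 := by
      apply hIC 0
      apply subset_closure
      simpa using Ioo_subset_Icc_self hy1
    exact Set.disjoint_left.1 (hdisj (1+k) (by omega)) hyC0 hyC
  obtain ⟨j, l, hjll, hCeq⟩ := hjl
  have hex : ∃ k, 0 < k ∧ C (j + k) = C j :=
    ⟨l - j, by omega, by rw [Nat.add_sub_cancel' hjll.le]; exact hCeq.symm⟩
  set n := Nat.find hex with hndef
  obtain ⟨hnpos, hCn⟩ := Nat.find_spec hex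
  have hper : ∀ m, j ≤ m → C (m + n) = C m := by
    intro m hm
    induction m, hm using Nat.le_induction with
    | base => exact hCn
    | succ m hm ih =>
        have := Ck_step hf hx₀ ih
        rwa [show m + n + 1 = m + 1 + n by ring] at this
  have hmod : ∀ k, C (j + k) = C (j + k % n) := by
    intro k
    induction k using Nat.strong_induction_on with
    | _ k ih =>
      by_cases hk : k < n
      · rw [Nat.mod_eq_of_lt hk]
      · push_neg at hk
        have h1 : k - n < k := by omega
        have h2 : C (j + k) = C (j + (k - n)) := by
          rw [show j + k = (j + (k - n)) + n by omega]
          exact hper _ (by omega)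
        rw [h2, ih _ h1, Nat.mod_eq_sub_mod hk]
  set D : Fin n → Set (Set.Icc a b) := fun i => C (j + i.val) with hD
  have key : ∀ i₁ i₂ : Fin n, (i₁:ℕ) < (i₂:ℕ) → D i₁ ≠ D i₂ := by
    intro i₁ i₂ hlt heq
    have hi₂ : (i₂:ℕ) < n := i₂.2
    have hstepit := Ck_step_iter hf hx₀ heq (n - (i₂:ℕ))
    rw [show j + (i₂:ℕ) + (n - (i₂:ℕ)) = j + n by omega] at hstepit
    rw [show j + (i₁:ℕ) + (n - (i₂:ℕ)) = j + (n - ((i₂:ℕ) - (i₁:ℕ))) by omega] at hstepit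
    have hfinal : C (j + (n - ((i₂:ℕ) - (i₁:ℕ)))) = C j := hstepit.trans hCn
    have hlt2 : n - ((i₂:ℕ) - (i₁:ℕ)) < n := by omega
    exact Nat.find_min hex hlt2 ⟨by omega, hfinal⟩
  have hDdist : ∀ i₁ i₂ : Fin n, i₁ ≠ i₂ → D i₁ ≠ D i₂ := by
    intro i₁ i₂ hne
    rcases lt_trichotomy (i₁:ℕ) (i₂:ℕ) with h|h|h
    · exact key _ _ h
    · exact absurd (Fin.ext h) hne
    · exact fun he => key _ _ h he.symm
  have hDdisj : ∀ i₁ i₂ : Fin n, i₁ ≠ i₂ → Disjoint (D i₁) (D i₂) := by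
    intro i₁ i₂ hne
    rcases Ck_eq_or_disjoint (f := f) (x₀ := α₀) (j + (i₁:ℕ)) (j + (i₂:ℕ)) with h | h
    · exact absurd h (hDdist i₁ i₂ hne)
    · exact h
  have hDclosed : ∀ i : Fin n, IsClosed (D i) := fun i => Ck_closed hx₀ _
  have hDpreconn : ∀ i : Fin n, IsPreconnected (D i) := fun i =>
    isPreconnected_connectedComponentIn
  have hIkD : ∀ i : Fin n, Ik f α₀ β₀ (j + (i:ℕ)) ⊆ D i := fun i => hIC _
  have hDnondeg : ∀ i : Fin n, ∃ u ∈ D i, ∃ v ∈ D i, u < v := by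
    intro i
    obtain ⟨u, hu, v, hv, huv⟩ := Ik_nondeg hab hf hstr hαβ hbaseM (j + (i:ℕ))
    exact ⟨u, hIkD i hu, v, hIkD i hv, huv⟩
  have hDsub : ∀ i : Fin n, f '' D i ⊆ D ⟨((i:ℕ)+1) % n, Nat.mod_lt _ hnpos⟩ := by
    intro i
    refine (f_image_Ck hf hx₀ _).trans ?_
    have h1 : C (j + ((i:ℕ)+1)) = C (j + ((i:ℕ)+1) % n) := hmod _
    intro z hz
    have hz2 : z ∈ C (j + ((i:ℕ)+1)) := by
      rwa [show j + ((i:ℕ)+1) = j + (i:ℕ) + 1 by ring]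
    show z ∈ C (j + ((i:ℕ)+1) % n)
    rw [← h1]
    exact hz2
  have hUnion : (⋃ i, D i) = Mset f := by
    apply Subset.antisymm
    · exact iUnion_subset fun i => connectedComponentIn_subset _ _
    · have hd := tail_dense hab hf hstr hαβ hbaseM j
      refine hd.trans ?_
      have hclosed : IsClosed (⋃ i, D i) := isClosed_iUnion_of_finite hDclosed
      refine closure_minimal ?_ hclosed
      refine iUnion_subset fun k => ?_
      intro y hy
      refine mem_iUnion.2 ⟨⟨k % n, Nat.mod_lt _ hnpos⟩, ?_⟩
      have h1 : y ∈ C (j+k) := hIC (j+k) (subset_closure hy)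
      rwa [hmod k] at h1
  have hT : Mset f ⊆ ⋃ i, f '' D i := by
    apply Mset_min
    refine ⟨isClosed_iUnion_of_finite
      (fun i => (((hDclosed i).isCompact).image hf).isClosed), ?_, ?_⟩
    · rw [image_iUnion]
      refine iUnion_subset fun i => ?_
      refine (image_mono (f := f) (hDsub i)).trans ?_
      exact subset_iUnion (fun i => f '' D i) _
    · obtain ⟨u, hu, v, hv, huv⟩ := Ik_nondeg hab hf hstr hαβ hbaseM (j + (⟨0, hnpos⟩ : Fin n) + 1)
      obtain ⟨z, hz1, hz2⟩ := exists_btw _ _ huv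
      refine ⟨z, ?_⟩
      have hIoo : Ioo u v ⊆ ⋃ i, f '' D i := by
        refine subset_trans ?_ (subset_iUnion (fun i => f '' D i) (⟨0, hnpos⟩ : Fin n))
        have h1 : Icc u v ⊆ Ik f α₀ β₀ (j + (⟨0, hnpos⟩ : Fin n) + 1) :=
          (ordConn_of_preconn (Ik_preconn hf _)).out hu hv
        have h2 : Ik f α₀ β₀ (j + (⟨0, hnpos⟩ : Fin n) + 1) = f '' Ik f α₀ β₀ (j + (⟨0, hnpos⟩ : Fin n)) :=
          (Ik_image hf _).symm
        refine (Ioo_subset_Icc_self.trans (h1.trans ?_))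
        rw [h2]
        exact image_mono (f := f) (hIkD ⟨0, hnpos⟩)
      exact ((isOpen_IooX u v).subset_interior_iff.2 hIoo) ⟨hz1, hz2⟩
  have hDexact : ∀ i : Fin n, f '' D i = D ⟨((i:ℕ)+1) % n, Nat.mod_lt _ hnpos⟩ := by
    intro i
    refine (hDsub i).antisymm ?_
    intro z hz
    have hzM : z ∈ Mset f := connectedComponentIn_subset _ _ hz
    obtain ⟨m, hm⟩ := mem_iUnion.1 (hT hzM)
    have hzD : z ∈ D ⟨((m:ℕ)+1) % n, Nat.mod_lt _ hnpos⟩ := hDsub m hm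
    have hmi : m = i := by
      by_contra hne
      have hne2 : (⟨((m:ℕ)+1) % n, Nat.mod_lt _ hnpos⟩ : Fin n) ≠ ⟨((i:ℕ)+1) % n, Nat.mod_lt _ hnpos⟩ := by
        intro he
        apply hne
        apply Fin.ext
        exact next_inj m.2 i.2 (congrArg Fin.val he)
      exact Set.disjoint_left.1 (hDdisj _ _ hne2) hzD hz
    exact hmi ▸ hm
  exact ⟨n, hnpos, D, hDclosed, hDpreconn, hDnondeg, hDdisj, hUnion, hDexact⟩


/-- regularity of the minimal set -/
lemma Mset_regular (hab : a < b) (hf : Continuous f) (hstr : StronglyIndecomposable f) :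
    Mset f ⊆ closure (interior (Mset f)) := by
  obtain ⟨α₀, β₀, hαβ, hbase⟩ := exists_Icc_subset hab isOpen_interior (Mset_int_ne hab hstr)
  have hbaseM : Icc α₀ β₀ ⊆ Mset f := hbase.trans interior_subset
  refine (tail_dense hab hf hstr hαβ hbaseM 0).trans ?_
  refine closure_minimal ?_ isClosed_closure
  refine iUnion_subset fun k => ?_
  refine subset_trans subset_closure ?_
  obtain ⟨u, hu, v, hv, huv⟩ := Ik_nondeg hab hf hstr hαβ hbaseM (0+k)
  exact sub_closure_interior (Ik_sub hbaseM _) (Ik_preconn hf _) hu hv huv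

/-- strong transitivity on the minimal set -/
lemma strong_trans (hab : a < b) (hf : Continuous f) (hstr : StronglyIndecomposable f)
    {U V : Set (Set.Icc a b)} (hU : IsOpen U) (hV : IsOpen V)
    (hUne : (U ∩ Mset f).Nonempty) (hVne : (V ∩ Mset f).Nonempty) :
    ∃ k, ∃ x, x ∈ U ∩ Mset f ∧ f^[k] x ∈ V ∩ Mset f := by
  obtain ⟨u, huU, huM⟩ := hUne
  have hu2 : u ∈ closure (interior (Mset f)) := Mset_regular hab hf hstr huM
  obtain ⟨w, hwU, hwint⟩ := mem_closure_iff.1 hu2 U hU huU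
  have hd := orbit_dense hab hf hstr hU ⟨w, hwU, hwint⟩
  obtain ⟨v, hvV, hvM⟩ := hVne
  obtain ⟨y, hyV, hy2⟩ := mem_closure_iff.1 (hd hvM) V hV hvV
  obtain ⟨k, hk⟩ := mem_iUnion.1 hy2
  obtain ⟨x, hx, rfl⟩ := hk
  exact ⟨k, x, ⟨hx.1, hx.2⟩, hyV, iter_mem_Mset hx.2 k⟩

lemma iter_inv_set {g : Set.Icc a b → Set.Icc a b} {A : Set (Set.Icc a b)}
    (h : g '' A ⊆ A) (m : ℕ) : g^[m] '' A ⊆ A := by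
  induction m with
  | zero => simp
  | succ k ih =>
      rw [Function.iterate_succ', image_comp]
      exact (image_mono (f := g) ih).trans h

lemma orbit_hull_preconn (hf : Continuous f) {r : ℕ} {K : Set (Set.Icc a b)}
    (hK : IsPreconnected K) {e : Set.Icc a b} (he : e ∈ K) (hre : f^[r] e ∈ K) :
    IsPreconnected (⋃ m, f^[r*m] '' K) := by
  have hpre : ∀ k : ℕ, IsPreconnected (f^[r*k] '' K) :=
    fun k => hK.image _ (cont_iter hf (r*k)).continuousOn
  have hSm : ∀ m : ℕ, IsPreconnected (⋃ k ≤ m, f^[r*k] '' K) := by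
    intro m
    induction m with
    | zero =>
        have : (⋃ k ≤ 0, f^[r*k] '' K) = f^[r*0] '' K := by simp
        rw [this]
        exact hpre 0
    | succ m ih =>
        rw [biUnion_le_succ (fun k => f^[r*k] '' K) m]
        apply IsPreconnected.union (f^[r*(m+1)] e) ?_ ?_ ih (hpre (m+1))
        · refine mem_biUnion (le_refl m) ?_
          refine ⟨f^[r] e, hre, ?_⟩
          have hmul : r * (m+1) = r * m + r := by ring
          rw [hmul, Function.iterate_add_apply]
        · exact mem_image_of_mem _ he
  apply isPreconnected_of_forall e
  intro y hy
  obtain ⟨m, hm⟩ := mem_iUnion.1 hy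
  refine ⟨⋃ k ≤ m, f^[r*k] '' K, ?_, ?_, ?_, hSm m⟩
  · exact iUnion₂_subset fun k _ => subset_iUnion (fun j => f^[r*j] '' K) k
  · exact mem_biUnion (Nat.zero_le m) ⟨e, he, by simp⟩
  · exact mem_biUnion (le_refl m) hm


/-- IVT fixed point -/
lemma exists_fixed_between (hf : Continuous f) {N : ℕ} {x w : Set.Icc a b} (hxw : x ≤ w)
    (h1 : (x:ℝ) ≤ (f^[N] x : Set.Icc a b)) (h2 : ((f^[N] w : Set.Icc a b) : ℝ) ≤ (w:ℝ)) :
    ∃ z ∈ Icc x w, f^[N] z = z := by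
  set φ : Set.Icc a b → ℝ := fun t => ((f^[N] t : Set.Icc a b) : ℝ) - (t:ℝ) with hφdef
  have hφ : ContinuousOn φ (Icc x w) :=
    (((cont_iter hf N).subtype_val).sub continuous_subtype_val).continuousOn
  have hIVT := (preconn_Icc x w).intermediate_value
    (right_mem_Icc.2 hxw) (left_mem_Icc.2 hxw) hφ
  have h0 : (0:ℝ) ∈ Icc (φ w) (φ x) := by
    constructor
    · show φ w ≤ 0
      simp only [hφdef]
      linarith
    · show (0:ℝ) ≤ φ x
      simp only [hφdef]
      linarith
  obtain ⟨z, hz, hz0⟩ := hIVT h0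
  refine ⟨z, hz, Subtype.ext ?_⟩
  have : ((f^[N] z : Set.Icc a b) : ℝ) - (z:ℝ) = 0 := hz0
  linarith

/-- the key periodic point construction -/
lemma periodic_in_interval (hab : a < b) (hf : Continuous f)
    {α β x x2 : Set.Icc a b} {r r2 : ℕ} (hr : 1 ≤ r) (hr2 : 1 ≤ r2)
    (hαx : α ≤ x) (hxx2 : x < x2)
    (hfx : x2 < f^[r] x) (hfxβ : f^[r] x ≤ β)
    (hfx2α : α ≤ f^[r2] x2) (hfx2 : f^[r2] x2 < x) :
    ∃ z ∈ Icc α β, ∃ N, 1 ≤ N ∧ f^[N] z = z := by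
  classical
  set K : Set (Set.Icc a b) := Icc x (f^[r] x) with hK
  have hxK : x ∈ K := left_mem_Icc.2 (hxx2.trans hfx).le
  have hfxK : f^[r] x ∈ K := right_mem_Icc.2 (hxx2.trans hfx).le
  have hx2K : x2 ∈ K := ⟨hxx2.le, hfx.le⟩
  set K2 : Set (Set.Icc a b) := Icc (f^[r2] x2) x2 with hK2
  have hx2K2 : x2 ∈ K2 := right_mem_Icc.2 (hfx2.trans hxx2).le
  have hfx2K2 : f^[r2] x2 ∈ K2 := left_mem_Icc.2 (hfx2.trans hxx2).le
  have hxK2 : x ∈ K2 := ⟨hfx2.le, hxx2.le⟩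
  by_cases hA : ∃ k, 1 ≤ k ∧ ∃ w ∈ K, f^[r*k] w < x
  · -- CASE A: some image of K dips below x
    set k₁ := Nat.find hA with hk₁def
    obtain ⟨hk₁pos, w₁, hw₁K, hw₁⟩ := Nat.find_spec hA
    rw [← hk₁def] at hk₁pos hw₁
    have hx_up : (x:ℝ) ≤ ((f^[r*k₁] x : Set.Icc a b) : ℝ) := by
      rcases eq_or_lt_of_le hk₁pos with he | hlt
      · have heq1 : f^[r*k₁] x = f^[r] x := by rw [← he, mul_one]
        rw [heq1]
        exact Subtype.coe_le_coe.2 ((hxx2.trans hfx).le)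
      · have hmin := Nat.find_min hA (m := k₁ - 1) (by omega)
        have hnot : ∀ w ∈ K, ¬ f^[r*(k₁-1)] w < x := by
          intro w hw hlt2
          exact hmin ⟨by omega, w, hw, hlt2⟩
        have hk' : k₁ = (k₁ - 1) + 1 := by omega
        have heq : f^[r*k₁] x = f^[r*(k₁-1)] (f^[r] x) := by
          conv_lhs => rw [hk']
          rw [Nat.mul_succ, Function.iterate_add_apply]
        rw [heq]
        exact Subtype.coe_le_coe.2 (not_lt.1 (hnot _ hfxK))
    have h2 : ((f^[r*k₁] w₁ : Set.Icc a b) : ℝ) ≤ (w₁:ℝ) := by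
      have hxw : (x:ℝ) ≤ (w₁:ℝ) := hw₁K.1
      have h3 : ((f^[r*k₁] w₁ : Set.Icc a b) : ℝ) < (x:ℝ) := hw₁
      linarith
    obtain ⟨z, hz, hzfix⟩ := exists_fixed_between hf hw₁K.1 hx_up h2
    exact ⟨z, ⟨hαx.trans hz.1, hz.2.trans (hw₁K.2.trans hfxβ)⟩, r*k₁,
      Nat.mul_pos hr hk₁pos, hzfix⟩
  · -- CASE B: K never dips below x
    have hB : ∀ k, 1 ≤ k → ∀ w ∈ K, x ≤ f^[r*k] w := by
      intro k hk w hw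
      by_contra hlt
      exact hA ⟨k, hk, w, hw, not_le.1 hlt⟩
    by_cases hA2 : ∃ k, 1 ≤ k ∧ ∃ w ∈ K2, x2 < f^[r2*k] w
    · -- CASE Â (mirror of A)
      set k₂ := Nat.find hA2 with hk₂def
      obtain ⟨hk₂pos, w₂, hw₂K, hw₂⟩ := Nat.find_spec hA2
      rw [← hk₂def] at hk₂pos hw₂
      have hx2_dn : ((f^[r2*k₂] x2 : Set.Icc a b) : ℝ) ≤ (x2:ℝ) := by
        rcases eq_or_lt_of_le hk₂pos with he | hlt
        · have heq1 : f^[r2*k₂] x2 = f^[r2] x2 := by rw [← he, mul_one]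
          rw [heq1]
          exact Subtype.coe_le_coe.2 ((hfx2.trans hxx2).le)
        · have hmin := Nat.find_min hA2 (m := k₂ - 1) (by omega)
          have hnot : ∀ w ∈ K2, ¬ x2 < f^[r2*(k₂-1)] w := by
            intro w hw hlt2
            exact hmin ⟨by omega, w, hw, hlt2⟩
          have hk' : k₂ = (k₂ - 1) + 1 := by omega
          have heq : f^[r2*k₂] x2 = f^[r2*(k₂-1)] (f^[r2] x2) := by
            conv_lhs => rw [hk']
            rw [Nat.mul_succ, Function.iterate_add_apply]
          rw [heq]
          exact Subtype.coe_le_coe.2 (not_lt.1 (hnot _ hfx2K2))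
      have h1 : (w₂:ℝ) ≤ ((f^[r2*k₂] w₂ : Set.Icc a b) : ℝ) := by
        have h3 : (w₂:ℝ) ≤ (x2:ℝ) := hw₂K.2
        have h4 : (x2:ℝ) < ((f^[r2*k₂] w₂ : Set.Icc a b) : ℝ) := hw₂
        linarith
      obtain ⟨z, hz, hzfix⟩ := exists_fixed_between hf hw₂K.2 h1 hx2_dn
      exact ⟨z, ⟨hfx2α.trans (hw₂K.1.trans hz.1), hz.2.trans (hfx.le.trans hfxβ)⟩,
        r2*k₂, Nat.mul_pos hr2 hk₂pos, hzfix⟩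
    · -- CASE B ∧ B̂ : two invariant hulls intersect in Icc x x2
      have hB2 : ∀ k, 1 ≤ k → ∀ w ∈ K2, f^[r2*k] w ≤ x2 := by
        intro k hk w hw
        by_contra hlt
        exact hA2 ⟨k, hk, w, hw, not_le.1 hlt⟩
      set A' : Set (Set.Icc a b) := closure (⋃ m, f^[r*m] '' K) with hA'def
      set B' : Set (Set.Icc a b) := closure (⋃ m, f^[r2*m] '' K2) with hB'def
      have hA'pre : IsPreconnected A' :=
        (orbit_hull_preconn hf (preconn_Icc _ _) hxK hfxK).closure
      have hB'pre : IsPreconnected B' :=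
        (orbit_hull_preconn hf (preconn_Icc _ _) hx2K2 hfx2K2).closure
      have hxA' : x ∈ A' := subset_closure (mem_iUnion.2 ⟨0, ⟨x, hxK, by simp⟩⟩)
      have hx2A' : x2 ∈ A' := subset_closure (mem_iUnion.2 ⟨0, ⟨x2, hx2K, by simp⟩⟩)
      have hxB' : x ∈ B' := subset_closure (mem_iUnion.2 ⟨0, ⟨x, hxK2, by simp⟩⟩)
      have hx2B' : x2 ∈ B' := subset_closure (mem_iUnion.2 ⟨0, ⟨x2, hx2K2, by simp⟩⟩)
      have hA'lb : A' ⊆ Ici x := by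
        refine closure_minimal ?_ (isClosed_IciX x)
        refine iUnion_subset fun m => ?_
        rcases Nat.eq_zero_or_pos m with rfl | hm
        · rintro y ⟨w, hw, rfl⟩
          simpa using hw.1
        · rintro y ⟨w, hw, rfl⟩
          exact hB m hm w hw
      have hB'ub : B' ⊆ Iic x2 := by
        refine closure_minimal ?_ (isClosed_IicX x2)
        refine iUnion_subset fun m => ?_
        rcases Nat.eq_zero_or_pos m with rfl | hm
        · rintro y ⟨w, hw, rfl⟩
          simpa using hw.2
        · rintro y ⟨w, hw, rfl⟩
          exact hB2 m hm w hw
      have hCsub : A' ∩ B' ⊆ Icc x x2 := fun z hz => ⟨hA'lb hz.1, hB'ub hz.2⟩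
      have hA'inv : f^[r] '' A' ⊆ A' := by
        refine (image_closure_subset_closure_image (cont_iter hf r)).trans (closure_mono ?_)
        rw [image_iUnion]
        refine iUnion_subset fun m => ?_
        rw [← image_comp]
        rintro y ⟨w, hw, rfl⟩
        refine mem_iUnion.2 ⟨m+1, w, hw, ?_⟩
        show f^[r*(m+1)] w = (f^[r] ∘ f^[r*m]) w
        have hidx : r*(m+1) = r + r*m := by ring
        rw [hidx, Function.iterate_add_apply]
        rfl
      have hB'inv : f^[r2] '' B' ⊆ B' := by
        refine (image_closure_subset_closure_image (cont_iter hf r2)).trans (closure_mono ?_)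
        rw [image_iUnion]
        refine iUnion_subset fun m => ?_
        rw [← image_comp]
        rintro y ⟨w, hw, rfl⟩
        refine mem_iUnion.2 ⟨m+1, w, hw, ?_⟩
        show f^[r2*(m+1)] w = (f^[r2] ∘ f^[r2*m]) w
        have hidx : r2*(m+1) = r2 + r2*m := by ring
        rw [hidx, Function.iterate_add_apply]
        rfl
      have hNinvA : f^[r*r2] '' A' ⊆ A' := by
        rw [Function.iterate_mul]
        exact iter_inv_set hA'inv r2
      have hNinvB : f^[r*r2] '' B' ⊆ B' := by
        rw [show r*r2 = r2*r by ring, Function.iterate_mul]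
        exact iter_inv_set hB'inv r
      have hmemx : f^[r*r2] x ∈ Icc x x2 :=
        hCsub ⟨hNinvA ⟨x, hxA', rfl⟩, hNinvB ⟨x, hxB', rfl⟩⟩
      have hmemx2 : f^[r*r2] x2 ∈ Icc x x2 :=
        hCsub ⟨hNinvA ⟨x2, hx2A', rfl⟩, hNinvB ⟨x2, hx2B', rfl⟩⟩
      obtain ⟨z, hz, hzfix⟩ := exists_fixed_between hf hxx2.le
        (Subtype.coe_le_coe.2 hmemx.1) (Subtype.coe_le_coe.2 hmemx2.2)
      exact ⟨z, ⟨hαx.trans hz.1, hz.2.trans (hfx.le.trans hfxβ)⟩,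
        r*r2, Nat.mul_pos hr hr2, hzfix⟩


lemma restrict_iter {g : Set.Icc a b → Set.Icc a b} {s : Set (Set.Icc a b)}
    (h : MapsTo g s s) (k : ℕ) (x : s) :
    ((MapsTo.restrict g s s h)^[k] x : Set.Icc a b) = g^[k] (x : Set.Icc a b) := by
  induction k with
  | zero => rfl
  | succ m ih =>
      rw [Function.iterate_succ_apply', Function.iterate_succ_apply',
        MapsTo.val_restrict_apply, ih]

lemma mod_cancel {n i d : ℕ} (hi : i < n) (hd : d < n) (h : (i + d) % n = i) : d = 0 := by
  rcases Nat.lt_or_ge (i+d) n with hlt | hge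
  · rw [Nat.mod_eq_of_lt hlt] at h
    omega
  · rw [Nat.mod_eq_sub_mod hge, Nat.mod_eq_of_lt (by omega)] at h
    omega

lemma exists_Icc_in_open_meeting_M (hab : a < b) (hf : Continuous f)
    (hstr : StronglyIndecomposable f) {O : Set (Set.Icc a b)} (hO : IsOpen O)
    (hne : (O ∩ Mset f).Nonempty) :
    ∃ p q : Set.Icc a b, p < q ∧ Icc p q ⊆ O ∩ interior (Mset f) := by
  obtain ⟨w, hwO, hwM⟩ := hne
  obtain ⟨y, hyO, hyint⟩ := mem_closure_iff.1 (Mset_regular hab hf hstr hwM) O hO hwO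
  exact exists_Icc_subset hab (hO.inter isOpen_interior) ⟨y, hyO, hyint⟩

/-- a periodic point in every open set meeting the minimal set -/
lemma per_in_open (hab : a < b) (hf : Continuous f) (hstr : StronglyIndecomposable f)
    {O : Set (Set.Icc a b)} (hO : IsOpen O) (hne : (O ∩ Mset f).Nonempty) :
    ∃ z, z ∈ O ∩ Mset f ∧ ∃ N, 1 ≤ N ∧ f^[N] z = z := by
  obtain ⟨p, q, hpq, hsub⟩ := exists_Icc_in_open_meeting_M hab hf hstr hO hne
  have hIccM : Icc p q ⊆ Mset f :=
    hsub.trans ((inter_subset_right).trans interior_subset)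
  obtain ⟨γ₂, h1, h2⟩ := exists_btw _ _ hpq
  obtain ⟨γ₁, h3, h4⟩ := exists_btw _ _ h1
  obtain ⟨γ₃, h5, h6⟩ := exists_btw _ _ h2
  obtain ⟨γ₄, h7, h8⟩ := exists_btw _ _ h6
  have hIoo12 : Ioo γ₁ γ₂ ⊆ Icc p q := fun y hy => ⟨(h3.trans hy.1).le, (hy.2.trans h2).le⟩
  have hIoo23 : Ioo γ₂ γ₃ ⊆ Icc p q := fun y hy => ⟨(h1.trans hy.1).le, ((hy.2.trans h7).trans h8).le⟩
  have hIoo34 : Ioo γ₃ γ₄ ⊆ Icc p q := fun y hy => ⟨(h1.trans (h5.trans hy.1)).le, (hy.2.trans h8).le⟩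
  have hIoo01 : Ioo p γ₁ ⊆ Icc p q := fun y hy => ⟨hy.1.le, ((hy.2.trans h4).trans h2).le⟩
  have hne12 : (Ioo γ₁ γ₂ ∩ Mset f).Nonempty := by
    obtain ⟨z, hz1, hz2⟩ := exists_btw _ _ h4
    exact ⟨z, ⟨hz1, hz2⟩, hIccM (hIoo12 ⟨hz1, hz2⟩)⟩
  have hne23 : (Ioo γ₂ γ₃ ∩ Mset f).Nonempty := by
    obtain ⟨z, hz1, hz2⟩ := exists_btw _ _ h5
    exact ⟨z, ⟨hz1, hz2⟩, hIccM (hIoo23 ⟨hz1, hz2⟩)⟩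
  have hne34 : (Ioo γ₃ γ₄ ∩ Mset f).Nonempty := by
    obtain ⟨z, hz1, hz2⟩ := exists_btw _ _ h7
    exact ⟨z, ⟨hz1, hz2⟩, hIccM (hIoo34 ⟨hz1, hz2⟩)⟩
  have hne01 : (Ioo p γ₁ ∩ Mset f).Nonempty := by
    obtain ⟨z, hz1, hz2⟩ := exists_btw _ _ h3
    exact ⟨z, ⟨hz1, hz2⟩, hIccM (hIoo01 ⟨hz1, hz2⟩)⟩
  obtain ⟨r, x, hxU, hxV⟩ := strong_trans hab hf hstr (isOpen_IooX γ₁ γ₂)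
    (isOpen_IooX γ₃ γ₄) hne12 hne34
  obtain ⟨r2, x2, hx2U, hx2V⟩ := strong_trans hab hf hstr (isOpen_IooX γ₂ γ₃)
    (isOpen_IooX p γ₁) hne23 hne01
  have hr : 1 ≤ r := by
    rcases Nat.eq_zero_or_pos r with rfl | h
    · exfalso
      have h9 : x ∈ Ioo γ₃ γ₄ := by simpa using hxV.1
      exact absurd (hxU.1.2.trans h5) (not_lt.2 h9.1.le)
    · exact h
  have hr2 : 1 ≤ r2 := by
    rcases Nat.eq_zero_or_pos r2 with rfl | h
    · exfalso
      have h9 : x2 ∈ Ioo p γ₁ := by simpa using hx2V.1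
      exact absurd (h9.2.trans h4) (not_lt.2 hx2U.1.1.le)
    · exact h
  obtain ⟨z, hz, N, hN, hfix⟩ := periodic_in_interval hab hf hr hr2
    (h3.trans hxU.1.1).le (hxU.1.2.trans hx2U.1.1)
    (hx2U.1.2.trans hxV.1.1) (hxV.1.2.trans h8).le
    (hx2V.1.1.le) (hx2V.1.2.trans hxU.1.1)
  exact ⟨z, ⟨(hsub hz).1, hIccM hz⟩, N, hN, hfix⟩

end Dyn
end SIW

theorem stronglyIndecomposable_interval_map_cycle_of_chaotic_intervals
    (a b : ℝ) (hab : a < b)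
    (f : Set.Icc a b → Set.Icc a b) (hf : Continuous f)
    (hstr : StronglyIndecomposable f) :
    ∃ n : ℕ, ∃ hn : 0 < n, ∃ J : Fin n → Set (Set.Icc a b),
      (∀ i, IsClosed (J i)) ∧
      (∀ i, (J i).OrdConnected) ∧
      (∀ i, ∃ x ∈ J i, ∃ y ∈ J i, x ≠ y) ∧
      Pairwise (Function.onFun Disjoint J) ∧
      (∀ i : Fin n, f '' J i = J ⟨((i : ℕ) + 1) % n, Nat.mod_lt _ hn⟩) ∧
      (∃ hE : Set.MapsTo f (⋃ i, J i) (⋃ i, J i),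
        TopTransitive (Set.MapsTo.restrict f _ _ hE) ∧
        DensePeriodicPts (Set.MapsTo.restrict f _ _ hE)) ∧
      (∀ i : Fin n, ∃ hJi : Set.MapsTo (f^[n]) (J i) (J i),
        TopTransitive (Set.MapsTo.restrict (f^[n]) _ _ hJi) ∧
        DensePeriodicPts (Set.MapsTo.restrict (f^[n]) _ _ hJi)) := by
  classical
  obtain ⟨n, hn, D, hDcl, hDpre, hDnd, hDdisj, hDunion, hDimg⟩ :=
    SIW.cycle_structure hab hf hstr
  have hDM : ∀ i, D i ⊆ SIW.Mset f := fun i x hx =>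
    hDunion ▸ (Set.mem_iUnion.2 ⟨i, hx⟩)
  have hDcongr : ∀ (i j : Fin n), (i:ℕ) = (j:ℕ) → D i = D j := fun i j h => by
    rw [Fin.ext h]
  have hiter : ∀ (m : ℕ) (i : Fin n),
      f^[m] '' D i = D ⟨((i:ℕ) + m) % n, Nat.mod_lt _ hn⟩ := by
    intro m
    induction m with
    | zero =>
        intro i
        rw [Function.iterate_zero, Set.image_id]
        exact hDcongr i _ (show (i:ℕ) = ((i:ℕ)+0) % n by rw [Nat.add_zero, Nat.mod_eq_of_lt i.2])
    | succ m ih =>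
        intro i
        rw [Function.iterate_succ, Set.image_comp, hDimg i, ih]
        refine hDcongr _ _ ?_
        show ((((i:ℕ)+1) % n) + m) % n = ((i:ℕ) + (m+1)) % n
        rw [Nat.mod_add_mod]
        congr 1
        ring
  have hDn : ∀ i : Fin n, f^[n] '' D i = D i := by
    intro i
    rw [hiter n i]
    exact hDcongr _ _ (show ((i:ℕ)+n) % n = (i:ℕ) by rw [Nat.add_mod_right]; exact Nat.mod_eq_of_lt i.2)
  have hdvd : ∀ (i : Fin n) (k : ℕ) (z : Set.Icc a b),
      z ∈ D i → f^[k] z ∈ D i → n ∣ k := by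
    intro i k z hz hkz
    have h1 : f^[k] z ∈ D ⟨((i:ℕ) + k) % n, Nat.mod_lt _ hn⟩ := by
      rw [← hiter k i]
      exact Set.mem_image_of_mem _ hz
    by_cases he : (⟨((i:ℕ) + k) % n, Nat.mod_lt _ hn⟩ : Fin n) = i
    · have h2 : ((i:ℕ) + k) % n = (i:ℕ) := congrArg Fin.val he
      have h4 := Nat.add_mod (i:ℕ) k n
      rw [Nat.mod_eq_of_lt i.2] at h4
      have h3 : ((i:ℕ) + k % n) % n = (i:ℕ) := by
        rw [← h4]
        exact h2
      exact Nat.dvd_of_mod_eq_zero (SIW.mod_cancel i.2 (Nat.mod_lt _ hn) h3)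
    · exact absurd hkz (Set.disjoint_left.1 (hDdisj _ i he) h1)
  refine ⟨n, hn, D, hDcl, fun i => SIW.ordConn_of_preconn (hDpre i), ?_, ?_, hDimg, ?_, ?_⟩
  · intro i
    obtain ⟨u, hu, v, hv, huv⟩ := hDnd i
    exact ⟨u, hu, v, hv, ne_of_lt huv⟩
  · intro i j hij
    exact hDdisj i j hij
  · -- the union part
    have hME : Set.MapsTo f (SIW.Mset f) (SIW.Mset f) := fun x hx => SIW.Mset_inv ⟨x, hx, rfl⟩
    have hE : Set.MapsTo f (⋃ i, D i) (⋃ i, D i) := by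
      rw [hDunion]
      exact hME
    refine ⟨hE, ?_, ?_⟩
    · -- transitivity on E
      intro Ut Vt hUt hVt hUtne hVtne
      obtain ⟨U, hUopen, hUeq⟩ := isOpen_induced_iff.1 hUt
      obtain ⟨V, hVopen, hVeq⟩ := isOpen_induced_iff.1 hVt
      obtain ⟨u, hu⟩ := hUtne
      obtain ⟨v, hv⟩ := hVtne
      rw [← hUeq] at hu
      rw [← hVeq] at hv
      have huM : (u : Set.Icc a b) ∈ SIW.Mset f := by rw [← hDunion]; exact u.2
      have hvM : (v : Set.Icc a b) ∈ SIW.Mset f := by rw [← hDunion]; exact v.2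
      obtain ⟨k, x, hxU, hxV⟩ := SIW.strong_trans hab hf hstr hUopen hVopen
        ⟨u, hu, huM⟩ ⟨v, hv, hvM⟩
      have hxE : x ∈ ⋃ i, D i := by rw [hDunion]; exact hxU.2
      refine ⟨k, (Set.MapsTo.restrict f _ _ hE)^[k] ⟨x, hxE⟩, ⟨⟨x, hxE⟩, ?_, rfl⟩, ?_⟩
      · rw [← hUeq]
        exact hxU.1
      · rw [← hVeq]
        show ((Set.MapsTo.restrict f _ _ hE)^[k] ⟨x, hxE⟩ : Set.Icc a b) ∈ V
        rw [SIW.restrict_iter hE k ⟨x, hxE⟩]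
        exact hxV.1
    · -- dense periodic points on E
      apply dense_iff_inter_open.2
      intro Ut hUt hUtne
      obtain ⟨U, hUopen, hUeq⟩ := isOpen_induced_iff.1 hUt
      obtain ⟨u, hu⟩ := hUtne
      rw [← hUeq] at hu
      have huM : (u : Set.Icc a b) ∈ SIW.Mset f := by rw [← hDunion]; exact u.2
      obtain ⟨z, ⟨hzU, hzM⟩, N, hN, hfix⟩ :=
        SIW.per_in_open hab hf hstr hUopen ⟨u, hu, huM⟩
      have hzE : z ∈ ⋃ i, D i := by rw [hDunion]; exact hzM
      refine ⟨⟨z, hzE⟩, ?_, N, hN, ?_⟩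
      · rw [← hUeq]
        exact hzU
      · apply Subtype.ext
        rw [SIW.restrict_iter hE N ⟨z, hzE⟩]
        exact hfix
  · -- the individual intervals
    intro i
    have hJi : Set.MapsTo (f^[n]) (D i) (D i) := Set.mapsTo_iff_image_subset.2 (hDn i).le
    set G : Set (Set.Icc a b) := ⋃ m ∈ {m : Fin n | m ≠ i}, D m with hG
    have hGclosed : IsClosed G :=
      (Set.toFinite {m : Fin n | m ≠ i}).isClosed_biUnion (fun m _ => hDcl m)
    have hmemDi : ∀ z, z ∈ SIW.Mset f → z ∉ G → z ∈ D i := by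
      intro z hzM hzG
      rw [← hDunion] at hzM
      obtain ⟨m, hm⟩ := Set.mem_iUnion.1 hzM
      by_cases hmi : m = i
      · exact hmi ▸ hm
      · refine absurd ?_ hzG
        rw [hG]
        exact Set.mem_biUnion (show m ∈ {m : Fin n | m ≠ i} from hmi) hm
    have hDiG : ∀ z, z ∈ D i → z ∉ G := by
      intro z hz hzG
      obtain ⟨m, hm⟩ := Set.mem_iUnion.1 hzG
      obtain ⟨hmne, hm2⟩ := Set.mem_iUnion.1 hm
      exact Set.disjoint_left.1 (hDdisj m i hmne) hm2 hz
    refine ⟨hJi, ?_, ?_⟩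
    · -- transitivity of f^[n] on D i
      intro Ut Vt hUt hVt hUtne hVtne
      obtain ⟨U, hUopen, hUeq⟩ := isOpen_induced_iff.1 hUt
      obtain ⟨V, hVopen, hVeq⟩ := isOpen_induced_iff.1 hVt
      obtain ⟨u, hu⟩ := hUtne
      obtain ⟨v, hv⟩ := hVtne
      rw [← hUeq] at hu
      rw [← hVeq] at hv
      have huM : (u : Set.Icc a b) ∈ SIW.Mset f := hDM i u.2
      have hvM : (v : Set.Icc a b) ∈ SIW.Mset f := hDM i v.2
      obtain ⟨k, x, hxU, hxV⟩ := SIW.strong_trans hab hf hstr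
        (hUopen.inter hGclosed.isOpen_compl) (hVopen.inter hGclosed.isOpen_compl)
        ⟨u, ⟨hu, hDiG u u.2⟩, huM⟩ ⟨v, ⟨hv, hDiG v v.2⟩, hvM⟩
      have hxDi : x ∈ D i := hmemDi x hxU.2 hxU.1.2
      have hyDi : f^[k] x ∈ D i := hmemDi _ hxV.2 hxV.1.2
      obtain ⟨k', rfl⟩ := hdvd i k x hxDi hyDi
      have hxE : x ∈ D i := hxDi
      refine ⟨k', (Set.MapsTo.restrict (f^[n]) _ _ hJi)^[k'] ⟨x, hxE⟩, ⟨⟨x, hxE⟩, ?_, rfl⟩, ?_⟩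
      · rw [← hUeq]
        exact hxU.1.1
      · rw [← hVeq]
        show ((Set.MapsTo.restrict (f^[n]) _ _ hJi)^[k'] ⟨x, hxE⟩ : Set.Icc a b) ∈ V
        rw [SIW.restrict_iter hJi k' ⟨x, hxE⟩, ← Function.iterate_mul]
        exact hxV.1.1
    · -- dense periodic points of f^[n] on D i
      apply dense_iff_inter_open.2
      intro Ut hUt hUtne
      obtain ⟨U, hUopen, hUeq⟩ := isOpen_induced_iff.1 hUt
      obtain ⟨u, hu⟩ := hUtne
      rw [← hUeq] at hu
      have huM : (u : Set.Icc a b) ∈ SIW.Mset f := hDM i u.2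
      obtain ⟨z, ⟨hzU, hzM⟩, N, hN, hfix⟩ :=
        SIW.per_in_open hab hf hstr (hUopen.inter hGclosed.isOpen_compl)
          ⟨u, ⟨hu, hDiG u u.2⟩, huM⟩
      have hzDi : z ∈ D i := hmemDi z hzM hzU.2
      have hzDi' : f^[N] z ∈ D i := by rw [hfix]; exact hzDi
      obtain ⟨N', rfl⟩ := hdvd i N z hzDi hzDi'
      have hN' : 1 ≤ N' := by
        rcases Nat.eq_zero_or_pos N' with rfl | h
        · omega
        · exact h
      refine ⟨⟨z, hzDi⟩, ?_, N', hN', ?_⟩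
      · rw [← hUeq]
        exact hzU.1
      · apply Subtype.ext
        rw [SIW.restrict_iter hJi N' ⟨z, hzDi⟩, ← Function.iterate_mul]
        exact hfix
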